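/- arXiv:1008.2108 — 2 statements merged into one kernel-verified Lean document; each statement's English description precedes it below -/
import Mathlib

section
/- For all closed BCCSP processes p, q: if p ⊑_CS q then the inequation p ≤ q is derivable from the axiom set A_CS consisting of B1–B4 (each used as two inequations), all instances a.p' ≤ a.(p' + q') with p', q' closed and I(p') ∩ I(q') = ∅, and all instances a.p' + a.q' ≤ a.p' with p', q' closed. -/
inductive Proc (A : Type) : Type
  | nil : Proc A
  | pre : A → Proc A → Proc A
  | add : Proc A → Proc A → Proc A

inductive Step {A : Type} : Proc A → A → Proc A → Prop
  | pre (a : A) (p : Proc A) : Step (.pre a p) a p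
  | addL {p : Proc A} {a : A} {p' : Proc A} (q : Proc A) :
      Step p a p' → Step (.add p q) a p'
  | addR {q : Proc A} {a : A} {q' : Proc A} (p : Proc A) :
      Step q a q' → Step (.add p q) a q'

/-- `initials p` is the set `I(p)` of actions that `p` can immediately perform. -/
def initials {A : Type} (p : Proc A) : Set A := {a | ∃ p', Step p a p'}

/-- `{Ar, Al, Abi}` is a partition of the action set `A` (cells may be empty). -/
def IsPartition {A : Type} (Ar Al Abi : Set A) : Prop :=
  (Ar ∪ Al ∪ Abi = Set.univ) ∧ Disjoint Ar Al ∧ Disjoint Ar Abi ∧ Disjoint Al Abi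

/-- Covariant-contravariant simulation w.r.t. covariant actions `Ar`,
contravariant actions `Al` and bivariant actions `Abi`. -/
def IsCCSim {A : Type} (Ar Al Abi : Set A) (S : Proc A → Proc A → Prop) : Prop :=
  ∀ p q, S p q →
    (∀ a ∈ Ar ∪ Abi, ∀ p', Step p a p' → ∃ q', Step q a q' ∧ S p' q') ∧
    (∀ a ∈ Al ∪ Abi, ∀ q', Step q a q' → ∃ p', Step p a p' ∧ S p' q')

/-- The covariant-contravariant simulation preorder `p ≲_CC q`. -/
def ccLe {A : Type} (Ar Al Abi : Set A) (p q : Proc A) : Prop :=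
  ∃ S, IsCCSim Ar Al Abi S ∧ S p q

/-- Covariant-contravariant simulation equivalence `p ≡_CC q`. -/
def ccEq {A : Type} (Ar Al Abi : Set A) (p q : Proc A) : Prop :=
  ccLe Ar Al Abi p q ∧ ccLe Ar Al Abi q p

/-- Conformance simulation. -/
def IsConfSim {A : Type} (R : Proc A → Proc A → Prop) : Prop :=
  ∀ p q, R p q →
    initials p ⊆ initials q ∧
    (∀ a q', Step q a q' → a ∈ initials p → ∃ p', Step p a p' ∧ R p' q')

/-- The conformance simulation preorder `p ≲_CS q`. -/
def csLe {A : Type} (p q : Proc A) : Prop := ∃ R, IsConfSim R ∧ R p q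

/-- Conformance simulation equivalence `p ≡_CS q`. -/
def csEq {A : Type} (p q : Proc A) : Prop := csLe p q ∧ csLe q p

/-- The conformance precongruence `p ⊑_CS q`. -/
def csPre {A : Type} (p q : Proc A) : Prop := csLe p q ∧ initials q ⊆ initials p

/-- Plain simulation. -/
def IsSim {A : Type} (S : Proc A → Proc A → Prop) : Prop :=
  ∀ p q, S p q → ∀ a p', Step p a p' → ∃ q', Step q a q' ∧ S p' q'

/-- The plain simulation preorder `p ≲_S q`. -/
def simLe {A : Type} (p q : Proc A) : Prop := ∃ S, IsSim S ∧ S p q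

/-- Ready simulation. -/
def IsRSim {A : Type} (S : Proc A → Proc A → Prop) : Prop :=
  ∀ p q, S p q → initials p = initials q ∧
    (∀ a p', Step p a p' → ∃ q', Step q a q' ∧ S p' q')

/-- The ready simulation preorder `p ≲_RS q`. -/
def rsLe {A : Type} (p q : Proc A) : Prop := ∃ S, IsRSim S ∧ S p q

/-- Ready conformance simulation: a conformance simulation that additionally
guarantees `I(q) ⊆ I(p)` for all related pairs. -/
def IsRCSim {A : Type} (R : Proc A → Proc A → Prop) : Prop :=
  IsConfSim R ∧ ∀ p q, R p q → initials q ⊆ initials p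

/-- The ready conformance simulation preorder `p ≲_RCS q`. -/
def rcsLe {A : Type} (p q : Proc A) : Prop := ∃ R, IsRCSim R ∧ R p q

/-- Open BCCSP terms (with variables indexed by `ℕ`). -/
inductive Term (A : Type) : Type
  | var : ℕ → Term A
  | nil : Term A
  | pre : A → Term A → Term A
  | add : Term A → Term A → Term A

/-- Closed substitution applied to an open term. -/
def Term.subst {A : Type} (σ : ℕ → Proc A) : Term A → Proc A
  | .var n => σ n
  | .nil => .nil
  | .pre a t => .pre a (t.subst σ)
  | .add s t => .add (s.subst σ) (t.subst σ)

/-- View a closed process as an (open) term. -/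
def Proc.toTerm {A : Type} : Proc A → Term A
  | .nil => .nil
  | .pre a p => .pre a p.toTerm
  | .add p q => .add p.toTerm q.toTerm

/-- Inequational derivability (between closed processes) from a set `E` of
inequations between open terms: the least relation containing all substitution
instances of `E` and closed under reflexivity, transitivity and the congruence
rules for prefixing and `+`. -/
inductive DerivLe {A : Type} (E : Set (Term A × Term A)) : Proc A → Proc A → Prop
  | ax (l r : Term A) (σ : ℕ → Proc A) : (l, r) ∈ E → DerivLe E (l.subst σ) (r.subst σ)
  | refl (p : Proc A) : DerivLe E p p
  | trans {p q r : Proc A} : DerivLe E p q → DerivLe E q r → DerivLe E p r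
  | pre (a : A) {p q : Proc A} : DerivLe E p q → DerivLe E (.pre a p) (.pre a q)
  | add {p q r s : Proc A} : DerivLe E p q → DerivLe E r s → DerivLe E (.add p r) (.add q s)

/-- Equational derivability (between closed processes) from a set `E` of
equations between open terms. -/
inductive DerivEq {A : Type} (E : Set (Term A × Term A)) : Proc A → Proc A → Prop
  | ax (l r : Term A) (σ : ℕ → Proc A) : (l, r) ∈ E → DerivEq E (l.subst σ) (r.subst σ)
  | refl (p : Proc A) : DerivEq E p p
  | symm {p q : Proc A} : DerivEq E p q → DerivEq E q p
  | trans {p q r : Proc A} : DerivEq E p q → DerivEq E q r → DerivEq E p r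
  | pre (a : A) {p q : Proc A} : DerivEq E p q → DerivEq E (.pre a p) (.pre a q)
  | add {p q r s : Proc A} : DerivEq E p q → DerivEq E r s → DerivEq E (.add p r) (.add q s)

/-- Substitution of (possibly open) terms for variables. -/
def Term.substT {A : Type} (σ : ℕ → Term A) : Term A → Term A
  | .var n => σ n
  | .nil => .nil
  | .pre a t => .pre a (t.substT σ)
  | .add s t => .add (s.substT σ) (t.substT σ)

/-- Equational derivability between open terms from a set `E` of equations. -/
inductive TDerivEq {A : Type} (E : Set (Term A × Term A)) : Term A → Term A → Prop
  | ax (l r : Term A) (σ : ℕ → Term A) : (l, r) ∈ E → TDerivEq E (l.substT σ) (r.substT σ)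
  | refl (t : Term A) : TDerivEq E t t
  | symm {s t : Term A} : TDerivEq E s t → TDerivEq E t s
  | trans {s t u : Term A} : TDerivEq E s t → TDerivEq E t u → TDerivEq E s u
  | pre (a : A) {s t : Term A} : TDerivEq E s t → TDerivEq E (.pre a s) (.pre a t)
  | add {s t u v : Term A} : TDerivEq E s t → TDerivEq E u v → TDerivEq E (.add s u) (.add t v)

/-- The bisimulation axioms B1–B4, as equations. -/
def BEqns (A : Type) : Set (Term A × Term A) :=
  { (.add (.var 0) (.var 1), .add (.var 1) (.var 0)),
    (.add (.add (.var 0) (.var 1)) (.var 2), .add (.var 0) (.add (.var 1) (.var 2))),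
    (.add (.var 0) (.var 0), .var 0),
    (.add (.var 0) .nil, .var 0) }

/-- The bisimulation axioms B1–B4, each used as two inequations. -/
def BIneqs (A : Type) : Set (Term A × Term A) := BEqns A ∪ Prod.swap '' BEqns A

/-- The axiom set `A_CS`: B1–B4 as inequations, all closed instances
`a.p ≤ a.(p + q)` with `I(p) ∩ I(q) = ∅`, and all closed instances
`a.p + a.q ≤ a.p`. -/
def ACSIneqs (A : Type) : Set (Term A × Term A) :=
  BIneqs A ∪
  { e | ∃ (a : A) (p q : Proc A), initials p ∩ initials q = ∅ ∧
        e = ((Proc.pre a p).toTerm, (Proc.pre a (.add p q)).toTerm) } ∪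
  { e | ∃ (a : A) (p q : Proc A),
        e = ((Proc.add (.pre a p) (.pre a q)).toTerm, (Proc.pre a p).toTerm) }


section ACSAux

attribute [local instance] Classical.propDecidable

variable {A : Type}

/-- Size of a process (for strong induction). -/
def psize : Proc A → ℕ
  | .nil => 1
  | .pre _ p => psize p + 1
  | .add p q => psize p + psize q + 1

/-- The list of summands of a process. -/
def summands : Proc A → List (A × Proc A)
  | .nil => []
  | .pre a p => [(a, p)]
  | .add p q => summands p ++ summands q

/-- Sum of a list of prefixed processes. -/
def sumL : List (A × Proc A) → Proc A
  | [] => .nil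
  | x :: t => .add (.pre x.1 x.2) (sumL t)

lemma step_iff_mem {p : Proc A} {a : A} {p' : Proc A} :
    Step p a p' ↔ (a, p') ∈ summands p := by
  constructor
  · intro h
    induction h with
    | pre a p => simp [summands]
    | addL q h ih => simp only [summands, List.mem_append]; exact Or.inl ih
    | addR p h ih => simp only [summands, List.mem_append]; exact Or.inr ih
  · intro h
    induction p with
    | nil => simp [summands] at h
    | pre b r => simp [summands] at h; obtain ⟨rfl, rfl⟩ := h; exact Step.pre _ _
    | add r s ihr ihs =>
        simp only [summands, List.mem_append] at h
        rcases h with h | h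
        · exact Step.addL _ (ihr h)
        · exact Step.addR _ (ihs h)

lemma psize_step {p : Proc A} {a : A} {p' : Proc A} (h : Step p a p') :
    psize p' < psize p := by
  induction h with
  | pre a p => simp [psize]
  | addL q h ih => simp only [psize]; omega
  | addR p h ih => simp only [psize]; omega

lemma summands_sumL (l : List (A × Proc A)) : summands (sumL l) = l := by
  induction l with
  | nil => rfl
  | cons x t ih => simp [sumL, summands, ih]

lemma mem_initials_sumL {a : A} {l : List (A × Proc A)} :
    a ∈ initials (sumL l) ↔ ∃ s, (a, s) ∈ l := by
  constructor
  · rintro ⟨s, hs⟩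
    exact ⟨s, by simpa [summands_sumL] using step_iff_mem.1 hs⟩
  · rintro ⟨s, hs⟩
    exact ⟨s, step_iff_mem.2 (by simpa [summands_sumL] using hs)⟩

/-- Abbreviation for derivability from the `A_CS` axioms. -/
abbrev D (p q : Proc A) : Prop := DerivLe (ACSIneqs A) p q

lemma mem_ACS_of_B {e : Term A × Term A} (h : e ∈ BEqns A) : e ∈ ACSIneqs A :=
  Set.mem_union_left _ (Set.mem_union_left _ (Set.mem_union_left _ h))

lemma mem_ACS_of_Bswap {e : Term A × Term A} (h : e ∈ BEqns A) :
    e.swap ∈ ACSIneqs A :=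
  Set.mem_union_left _ (Set.mem_union_left _ (Set.mem_union_right _ ⟨e, h, rfl⟩))

lemma Dcomm (p q : Proc A) : D (.add p q) (.add q p) := by
  have h := DerivLe.ax (E := ACSIneqs A) (.add (.var 0) (.var 1)) (.add (.var 1) (.var 0))
    (fun n => if n = 0 then p else q) (mem_ACS_of_B (by simp [BEqns]))
  simpa [Term.subst] using h

lemma Dassoc (p q r : Proc A) : D (.add (.add p q) r) (.add p (.add q r)) := by
  have h := DerivLe.ax (E := ACSIneqs A)
    (.add (.add (.var 0) (.var 1)) (.var 2)) (.add (.var 0) (.add (.var 1) (.var 2)))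
    (fun n => if n = 0 then p else if n = 1 then q else r)
    (mem_ACS_of_B (by simp [BEqns]))
  simpa [Term.subst] using h

lemma Dassoc' (p q r : Proc A) : D (.add p (.add q r)) (.add (.add p q) r) := by
  have h := DerivLe.ax (E := ACSIneqs A)
    (.add (.var 0) (.add (.var 1) (.var 2))) (.add (.add (.var 0) (.var 1)) (.var 2))
    (fun n => if n = 0 then p else if n = 1 then q else r)
    (mem_ACS_of_Bswap
      (e := (.add (.add (.var 0) (.var 1)) (.var 2), .add (.var 0) (.add (.var 1) (.var 2))))
      (by simp [BEqns]))
  simpa [Term.subst] using h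

lemma Didem (p : Proc A) : D (.add p p) p := by
  have h := DerivLe.ax (E := ACSIneqs A) (.add (.var 0) (.var 0)) (.var 0)
    (fun _ => p) (mem_ACS_of_B (by simp [BEqns]))
  simpa [Term.subst] using h

lemma Didem' (p : Proc A) : D p (.add p p) := by
  have h := DerivLe.ax (E := ACSIneqs A) (.var 0) (.add (.var 0) (.var 0))
    (fun _ => p)
    (mem_ACS_of_Bswap (e := (.add (.var 0) (.var 0), .var 0)) (by simp [BEqns]))
  simpa [Term.subst] using h

lemma DunitR (p : Proc A) : D (.add p .nil) p := by
  have h := DerivLe.ax (E := ACSIneqs A) (.add (.var 0) .nil) (.var 0)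
    (fun _ => p) (mem_ACS_of_B (by simp [BEqns]))
  simpa [Term.subst] using h

lemma DunitR' (p : Proc A) : D p (.add p .nil) := by
  have h := DerivLe.ax (E := ACSIneqs A) (.var 0) (.add (.var 0) .nil)
    (fun _ => p)
    (mem_ACS_of_Bswap (e := (.add (.var 0) .nil, .var 0)) (by simp [BEqns]))
  simpa [Term.subst] using h

lemma subst_toTerm (sigma : ℕ → Proc A) (p : Proc A) : (Proc.toTerm p).subst sigma = p := by
  induction p with
  | nil => rfl
  | pre a p ih => simp [Proc.toTerm, Term.subst, ih]
  | add p q ihp ihq => simp [Proc.toTerm, Term.subst, ihp, ihq]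

lemma Dcs1 (a : A) {p q : Proc A} (h : initials p ∩ initials q = ∅) :
    D (.pre a p) (.pre a (.add p q)) := by
  have hm : ((Proc.pre a p).toTerm, (Proc.pre a (.add p q)).toTerm) ∈ ACSIneqs A :=
    Set.mem_union_left _ (Set.mem_union_right _ ⟨a, p, q, h, rfl⟩)
  have hd := DerivLe.ax _ _ (fun _ => Proc.nil) hm
  simpa [subst_toTerm] using hd

lemma Dcs2 (a : A) (p q : Proc A) :
    D (.add (.pre a p) (.pre a q)) (.pre a p) := by
  have hm : ((Proc.add (.pre a p) (.pre a q)).toTerm, (Proc.pre a p).toTerm) ∈ ACSIneqs A :=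
    Set.mem_union_right _ ⟨a, p, q, rfl⟩
  have hd := DerivLe.ax _ _ (fun _ => Proc.nil) hm
  simpa [subst_toTerm] using hd

lemma Dsum_append (l m : List (A × Proc A)) :
    D (sumL (l ++ m)) (.add (sumL l) (sumL m)) := by
  induction l with
  | nil => exact .trans (DunitR' _) (Dcomm _ _)
  | cons x t ih =>
      exact .trans (DerivLe.add (DerivLe.refl (.pre x.1 x.2)) ih) (Dassoc' _ _ _)

lemma Dsum_append' (l m : List (A × Proc A)) :
    D (.add (sumL l) (sumL m)) (sumL (l ++ m)) := by
  induction l with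
  | nil => exact .trans (Dcomm _ _) (DunitR _)
  | cons x t ih =>
      exact .trans (Dassoc _ _ _) (DerivLe.add (DerivLe.refl (.pre x.1 x.2)) ih)

lemma Dsum_perm {l m : List (A × Proc A)} (h : l.Perm m) : D (sumL l) (sumL m) := by
  induction h with
  | nil => exact .refl _
  | cons x h ih => exact DerivLe.add (.refl _) ih
  | swap x y t =>
      exact .trans (Dassoc' _ _ _) (.trans (DerivLe.add (Dcomm _ _) (.refl _)) (Dassoc _ _ _))
  | trans h1 h2 ih1 ih2 => exact .trans ih1 ih2

lemma Dsummands (p : Proc A) : D p (sumL (summands p)) := by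
  induction p with
  | nil => exact .refl _
  | pre a p _ => exact DunitR' _
  | add p q ihp ihq => exact .trans (DerivLe.add ihp ihq) (Dsum_append' _ _)

lemma Dsummands' (p : Proc A) : D (sumL (summands p)) p := by
  induction p with
  | nil => exact .refl _
  | pre a p _ => exact DunitR _
  | add p q ihp ihq => exact .trans (Dsum_append _ _) (DerivLe.add ihp ihq)

lemma Ddup {x : A × Proc A} {m : List (A × Proc A)} (h : x ∈ m) :
    D (sumL m) (.add (.pre x.1 x.2) (sumL m)) := by
  induction m with
  | nil => cases h
  | cons y t ih =>
      rcases List.mem_cons.1 h with rfl | h'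
      · exact .trans (DerivLe.add (Didem' _) (.refl _)) (Dassoc _ _ _)
      · exact .trans (DerivLe.add (.refl _) (ih h'))
          (.trans (Dassoc' _ _ _)
            (.trans (DerivLe.add (Dcomm _ _) (.refl _)) (Dassoc _ _ _)))

lemma Dsubdup {m l : List (A × Proc A)} (h : ∀ x ∈ m, x ∈ l) :
    D (sumL l) (.add (sumL m) (sumL l)) := by
  induction m with
  | nil => exact .trans (DunitR' _) (Dcomm _ _)
  | cons x t ih =>
      have h1 : D (sumL l) (.add (.pre x.1 x.2) (sumL l)) := Ddup (h x (by simp))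
      have h2 := ih (fun y hy => h y (by simp [hy]))
      exact .trans h1 (.trans (DerivLe.add (.refl _) h2) (Dassoc' _ _ _))

lemma DabsorbOne {b : A} {r : Proc A} {m : List (A × Proc A)} (h : (b, r) ∈ m) (s : Proc A) :
    D (.add (sumL m) (.pre b s)) (sumL m) := by
  induction m with
  | nil => cases h
  | cons y t ih =>
      rcases List.mem_cons.1 h with hy | h'
      · have : y = (b, r) := hy.symm
        subst this
        exact .trans (Dassoc _ _ _)
          (.trans (DerivLe.add (.refl _) (Dcomm _ _))
            (.trans (Dassoc' _ _ _) (DerivLe.add (Dcs2 b r s) (.refl _))))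
      · exact .trans (Dassoc _ _ _)
          (.trans (DerivLe.add (.refl _)
            (.trans (Dcomm _ _) (.trans (Dcomm _ _) (ih h')))) (.refl _))

lemma DabsorbAll {m l : List (A × Proc A)} (h : ∀ x ∈ l, ∃ r, (x.1, r) ∈ m) :
    D (.add (sumL m) (sumL l)) (sumL m) := by
  induction l with
  | nil => exact DunitR _
  | cons x t ih =>
      obtain ⟨r, hr⟩ := h x (by simp)
      have ih' := ih (fun y hy => h y (by simp [hy]))
      exact .trans (Dassoc' _ _ _)
        (.trans (DerivLe.add (DabsorbOne hr x.2) (.refl _)) ih')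

lemma Ddel {l m : List (A × Proc A)} (hml : ∀ x ∈ m, x ∈ l)
    (hlm : ∀ x ∈ l, ∃ r, (x.1, r) ∈ m) : D (sumL l) (sumL m) :=
  .trans (Dsubdup hml) (DabsorbAll hlm)

lemma ACS_main : ∀ n : ℕ, ∀ p q : Proc A, psize p + psize q ≤ n → csLe p q →
    (∀ a : A, D (.pre a p) (.pre a q)) ∧ (initials q ⊆ initials p → D p q) := by
  intro n
  induction n using Nat.strong_induction_on with
  | _ n IH =>
  intro p q hn hle
  obtain ⟨R, hR, hpq⟩ := hle
  obtain ⟨hI, hmatch⟩ := hR p q hpq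
  have IHpre : ∀ {p' q' : Proc A}, psize p' < psize p → psize q' < psize q → R p' q' →
      ∀ c : A, D (.pre c p') (.pre c q') := by
    intro p' q' hp hq hr c
    exact (IH (psize p' + psize q') (by omega) p' q' le_rfl ⟨R, hR, hr⟩).1 c
  have key : ∀ l : List (A × Proc A), (∀ x ∈ l, Step q x.1 x.2) → (∀ x ∈ l, x.1 ∈ initials p) →
      ∃ m : List (A × Proc A), (∀ y ∈ m, Step p y.1 y.2) ∧
        (∀ x ∈ l, ∃ r, (x.1, r) ∈ m) ∧ D (sumL m) (sumL l) := by
    intro l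
    induction l with
    | nil => exact fun _ _ => ⟨[], by simp, by simp, .refl _⟩
    | cons x t ih =>
        intro hstep hinit
        obtain ⟨m, hm1, hm2, hm3⟩ := ih (fun y hy => hstep y (by simp [hy]))
          (fun y hy => hinit y (by simp [hy]))
        obtain ⟨p', hp', hr'⟩ := hmatch x.1 x.2 (hstep x (by simp)) (hinit x (by simp))
        refine ⟨(x.1, p') :: m, ?_, ?_, ?_⟩
        · intro y hy
          rcases List.mem_cons.1 hy with rfl | hy'
          · exact hp'
          · exact hm1 y hy'
        · intro z hz
          rcases List.mem_cons.1 hz with rfl | hz'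
          · exact ⟨p', by simp⟩
          · obtain ⟨r, hr⟩ := hm2 z hz'
            exact ⟨r, by simp [hr]⟩
        · exact DerivLe.add
            (IHpre (psize_step hp') (psize_step (hstep x (by simp))) hr' x.1) hm3
  constructor
  · intro a
    have hins : ∀ x ∈ (summands q).filter (fun x => decide (x.1 ∈ initials p)),
        Step q x.1 x.2 ∧ x.1 ∈ initials p := by
      intro x hx
      have := List.mem_filter.1 hx
      exact ⟨step_iff_mem.2 this.1, of_decide_eq_true this.2⟩
    obtain ⟨m, hm1, hm2, hm3⟩ := key ((summands q).filter (fun x => decide (x.1 ∈ initials p)))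
      (fun x hx => (hins x hx).1) (fun x hx => (hins x hx).2)
    have hdisj : initials p ∩
        initials (sumL ((summands q).filter (fun x => !decide (x.1 ∈ initials p)))) = ∅ := by
      ext b
      simp only [Set.mem_inter_iff, Set.mem_empty_iff_false, iff_false, not_and]
      intro hb hbo
      obtain ⟨s, hs⟩ := mem_initials_sumL.1 hbo
      have h2 := (List.mem_filter.1 hs).2
      simp only [Bool.not_eq_true', decide_eq_false_iff_not] at h2
      exact h2 hb
    have hpm : D p (sumL m) := by
      refine .trans (Dsummands p) (Ddel (fun y hy => step_iff_mem.1 (hm1 y hy)) ?_)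
      intro x hx
      have hxi : x.1 ∈ initials p := ⟨x.2, step_iff_mem.2 hx⟩
      obtain ⟨q', hq'⟩ := hI hxi
      have hmem : (x.1, q') ∈ (summands q).filter (fun x => decide (x.1 ∈ initials p)) :=
        List.mem_filter.2 ⟨step_iff_mem.1 hq', decide_eq_true hxi⟩
      exact hm2 (x.1, q') hmem
    have hperm : D (sumL ((summands q).filter (fun x => decide (x.1 ∈ initials p)) ++
        (summands q).filter (fun x => !decide (x.1 ∈ initials p)))) (sumL (summands q)) :=
      Dsum_perm (List.filter_append_perm _ _)
    have h2 : D (.add p (sumL ((summands q).filter (fun x => !decide (x.1 ∈ initials p))))) q :=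
      .trans (DerivLe.add (.trans hpm hm3) (.refl _))
        (.trans (Dsum_append' _ _) (.trans hperm (Dsummands' q)))
    exact .trans (Dcs1 a hdisj) (DerivLe.pre a h2)
  · intro hqp
    obtain ⟨m, hm1, hm2, hm3⟩ := key (summands q)
      (fun x hx => step_iff_mem.2 hx) (fun x hx => hqp ⟨x.2, step_iff_mem.2 hx⟩)
    have h1 : D p (sumL m) := by
      refine .trans (Dsummands p) (Ddel (fun y hy => step_iff_mem.1 (hm1 y hy)) ?_)
      intro x hx
      obtain ⟨q', hq'⟩ := hI ⟨x.2, step_iff_mem.2 hx⟩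
      exact hm2 (x.1, q') (step_iff_mem.1 hq')
    exact .trans h1 (.trans hm3 (Dsummands' q))

end ACSAux

/-- Completeness of `A_CS` for the conformance precongruence. -/
theorem ACS_complete {A : Type} (p q : Proc A) (h : csPre p q) :
    DerivLe (ACSIneqs A) p q := by
  obtain ⟨hle, hIq⟩ := h
  exact (ACS_main (psize p + psize q) p q le_rfl hle).2 hIq
end

section
/- Let A be an action set with partition {A^r, A^l, A^bi} where A^bi = ∅ (so A = A^r ∪ A^l). Then the axiom set A_CC^≡ is complete for covariant-contravariant simulation equivalence: for all closed BCCSP processes p, q, if p ≡_CC q then the equation p = q is equationally derivable from A_CC^≡. -/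
/-- Schema (S1): `a.(x + b.y) = a.(x + b.y) + a.x` for `a, b ∈ A^r`. -/
def S1Eqns {A : Type} (Ar : Set A) : Set (Term A × Term A) :=
  { e | ∃ a ∈ Ar, ∃ b ∈ Ar,
      e = (.pre a (.add (.var 0) (.pre b (.var 1))),
           .add (.pre a (.add (.var 0) (.pre b (.var 1)))) (.pre a (.var 0))) }

/-- Schema (S2): `a.x = a.x + a.(x + b'.y)` for `a ∈ A^r`, `b' ∈ A^l`. -/
def S2Eqns {A : Type} (Ar Al : Set A) : Set (Term A × Term A) :=
  { e | ∃ a ∈ Ar, ∃ b ∈ Al,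
      e = (.pre a (.var 0),
           .add (.pre a (.var 0)) (.pre a (.add (.var 0) (.pre b (.var 1))))) }

/-- Schema (S3): `a'.x = a'.x + a'.(x + b.y)` for `a' ∈ A^l`, `b ∈ A^r`. -/
def S3Eqns {A : Type} (Ar Al : Set A) : Set (Term A × Term A) :=
  { e | ∃ a ∈ Al, ∃ b ∈ Ar,
      e = (.pre a (.var 0),
           .add (.pre a (.var 0)) (.pre a (.add (.var 0) (.pre b (.var 1))))) }

/-- Schema (S4): `a'.(x + b'.y) = a'.(x + b'.y) + a'.x` for `a', b' ∈ A^l`. -/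
def S4Eqns {A : Type} (Al : Set A) : Set (Term A × Term A) :=
  { e | ∃ a ∈ Al, ∃ b ∈ Al,
      e = (.pre a (.add (.var 0) (.pre b (.var 1))),
           .add (.pre a (.add (.var 0) (.pre b (.var 1)))) (.pre a (.var 0))) }

/-- The axiom set `A_CC^≡`: B1–B4 together with the schemas S1–S4. -/
def ACCEq {A : Type} (Ar Al : Set A) : Set (Term A × Term A) :=
  BEqns A ∪ S1Eqns Ar ∪ S2Eqns Ar Al ∪ S3Eqns Ar Al ∪ S4Eqns Al

/-! ### Auxiliary development for the completeness proof -/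

namespace CCAux

variable {A : Type}

/-- Size of a process. -/
def psize : Proc A → ℕ
  | .nil => 1
  | .pre _ p => psize p + 1
  | .add p q => psize p + psize q

lemma psize_pos (p : Proc A) : 1 ≤ psize p := by
  induction p with
  | nil => simp [psize]
  | pre a p ih => simp [psize]
  | add p q ih1 ih2 => simp [psize]; omega

lemma step_psize {p : Proc A} {a : A} {p' : Proc A} (h : Step p a p') :
    psize p' < psize p := by
  induction h with
  | pre a p => simp [psize]
  | addL q _ ih => have := psize_pos q; simp [psize]; omega
  | addR p _ ih => have := psize_pos p; simp [psize]; omega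

open Classical in
/-- Restriction of a process to summands whose action lies in `P`. -/
noncomputable def restrP (P : Set A) : Proc A → Proc A
  | .nil => .nil
  | .pre a p => if a ∈ P then .pre a p else .nil
  | .add p q => .add (restrP P p) (restrP P q)

lemma step_restrP {P : Set A} {p : Proc A} {b : A} {r : Proc A}
    (h : Step (restrP P p) b r) : Step p b r ∧ b ∈ P := by
  induction p with
  | nil => rw [restrP] at h; cases h
  | pre a p ih =>
      rw [restrP] at h
      split at h
      · cases h; exact ⟨Step.pre _ _, ‹_›⟩
      · cases h
  | add p q ih1 ih2 =>
      rw [restrP] at h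
      cases h with
      | addL _ hs => exact ⟨Step.addL _ (ih1 hs).1, (ih1 hs).2⟩
      | addR _ hs => exact ⟨Step.addR _ (ih2 hs).1, (ih2 hs).2⟩

lemma restrP_step {P : Set A} {p : Proc A} {b : A} {r : Proc A}
    (h : Step p b r) (hb : b ∈ P) : Step (restrP P p) b r := by
  induction h with
  | pre a p => rw [restrP, if_pos hb]; exact Step.pre _ _
  | addL q _ ih => rw [restrP]; exact Step.addL _ (ih hb)
  | addR p _ ih => rw [restrP]; exact Step.addR _ (ih hb)

variable (Ar Al : Set A)

/-- B1 instance. -/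
lemma dB1 (p q : Proc A) : DerivEq (ACCEq Ar Al) (.add p q) (.add q p) := by
  have h := DerivEq.ax (E := ACCEq Ar Al)
      (.add (.var 0) (.var 1)) (.add (.var 1) (.var 0))
      (fun n => match n with | 0 => p | _ => q)
      (by left; left; left; left; simp [BEqns])
  simpa [Term.subst] using h

/-- B2 instance. -/
lemma dB2 (p q r : Proc A) :
    DerivEq (ACCEq Ar Al) (.add (.add p q) r) (.add p (.add q r)) := by
  have h := DerivEq.ax (E := ACCEq Ar Al)
      (.add (.add (.var 0) (.var 1)) (.var 2)) (.add (.var 0) (.add (.var 1) (.var 2)))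
      (fun n => match n with | 0 => p | 1 => q | _ => r)
      (by left; left; left; left; simp [BEqns])
  simpa [Term.subst] using h

/-- B3 instance. -/
lemma dB3 (p : Proc A) : DerivEq (ACCEq Ar Al) (.add p p) p := by
  have h := DerivEq.ax (E := ACCEq Ar Al)
      (.add (.var 0) (.var 0)) (.var 0) (fun _ => p)
      (by left; left; left; left; simp [BEqns])
  simpa [Term.subst] using h

/-- B4 instance. -/
lemma dB4 (p : Proc A) : DerivEq (ACCEq Ar Al) (.add p .nil) p := by
  have h := DerivEq.ax (E := ACCEq Ar Al)
      (.add (.var 0) .nil) (.var 0) (fun _ => p)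
      (by left; left; left; left; simp [BEqns])
  simpa [Term.subst] using h

/-- S1 instance. -/
lemma dS1 {a b : A} (ha : a ∈ Ar) (hb : b ∈ Ar) (x y : Proc A) :
    DerivEq (ACCEq Ar Al) (.pre a (.add x (.pre b y)))
      (.add (.pre a (.add x (.pre b y))) (.pre a x)) := by
  have h := DerivEq.ax (E := ACCEq Ar Al)
      (.pre a (.add (.var 0) (.pre b (.var 1))))
      (.add (.pre a (.add (.var 0) (.pre b (.var 1)))) (.pre a (.var 0)))
      (fun n => match n with | 0 => x | _ => y)
      (by left; left; left; right; exact ⟨a, ha, b, hb, rfl⟩)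
  simpa [Term.subst] using h

/-- S2 instance. -/
lemma dS2 {a b : A} (ha : a ∈ Ar) (hb : b ∈ Al) (x y : Proc A) :
    DerivEq (ACCEq Ar Al) (.pre a x)
      (.add (.pre a x) (.pre a (.add x (.pre b y)))) := by
  have h := DerivEq.ax (E := ACCEq Ar Al)
      (.pre a (.var 0))
      (.add (.pre a (.var 0)) (.pre a (.add (.var 0) (.pre b (.var 1)))))
      (fun n => match n with | 0 => x | _ => y)
      (by left; left; right; exact ⟨a, ha, b, hb, rfl⟩)
  simpa [Term.subst] using h

/-- S3 instance. -/
lemma dS3 {a b : A} (ha : a ∈ Al) (hb : b ∈ Ar) (x y : Proc A) :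
    DerivEq (ACCEq Ar Al) (.pre a x)
      (.add (.pre a x) (.pre a (.add x (.pre b y)))) := by
  have h := DerivEq.ax (E := ACCEq Ar Al)
      (.pre a (.var 0))
      (.add (.pre a (.var 0)) (.pre a (.add (.var 0) (.pre b (.var 1)))))
      (fun n => match n with | 0 => x | _ => y)
      (by left; right; exact ⟨a, ha, b, hb, rfl⟩)
  simpa [Term.subst] using h

/-- S4 instance. -/
lemma dS4 {a b : A} (ha : a ∈ Al) (hb : b ∈ Al) (x y : Proc A) :
    DerivEq (ACCEq Ar Al) (.pre a (.add x (.pre b y)))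
      (.add (.pre a (.add x (.pre b y))) (.pre a x)) := by
  have h := DerivEq.ax (E := ACCEq Ar Al)
      (.pre a (.add (.var 0) (.pre b (.var 1))))
      (.add (.pre a (.add (.var 0) (.pre b (.var 1)))) (.pre a (.var 0)))
      (fun n => match n with | 0 => x | _ => y)
      (by right; exact ⟨a, ha, b, hb, rfl⟩)
  simpa [Term.subst] using h

/-- Derivable absorption preorder: `x` is absorbed by `t`. -/
def ple (x t : Proc A) : Prop := DerivEq (ACCEq Ar Al) (.add t x) t

lemma ple_refl (p : Proc A) : ple Ar Al p p := dB3 Ar Al p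

lemma ple_congr_right {x y y' : Proc A} (h : ple Ar Al x y)
    (h' : DerivEq (ACCEq Ar Al) y y') : ple Ar Al x y' :=
  DerivEq.trans (DerivEq.trans (DerivEq.add (DerivEq.symm h') (DerivEq.refl x)) h) h'

lemma ple_congr_left {x x' y : Proc A} (h : ple Ar Al x y)
    (h' : DerivEq (ACCEq Ar Al) x' x) : ple Ar Al x' y :=
  DerivEq.trans (DerivEq.add (DerivEq.refl y) h') h

lemma ple_trans {x y z : Proc A} (h1 : ple Ar Al x y) (h2 : ple Ar Al y z) :
    ple Ar Al x z := by
  -- z + x = (z + y) + x = z + (y + x) = z + y = z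
  unfold ple at *
  have c1 : DerivEq (ACCEq Ar Al) (.add z x) (.add (.add z y) x) :=
    DerivEq.add (DerivEq.symm h2) (DerivEq.refl x)
  have c2 : DerivEq (ACCEq Ar Al) (.add (.add z y) x) (.add z (.add y x)) := dB2 ..
  have c3 : DerivEq (ACCEq Ar Al) (.add z (.add y x)) (.add z y) :=
    DerivEq.add (DerivEq.refl z) h1
  exact DerivEq.trans (DerivEq.trans (DerivEq.trans c1 c2) c3) h2

lemma ple_mono_left {x p : Proc A} (q : Proc A) (h : ple Ar Al x p) :
    ple Ar Al x (.add p q) := by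
  -- (p+q)+x = p+(q+x) = p+(x+q) = (p+x)+q = p+q
  unfold ple at *
  have c1 : DerivEq (ACCEq Ar Al) (.add (.add p q) x) (.add p (.add q x)) := dB2 ..
  have c2 : DerivEq (ACCEq Ar Al) (.add p (.add q x)) (.add p (.add x q)) :=
    DerivEq.add (DerivEq.refl p) (dB1 ..)
  have c3 : DerivEq (ACCEq Ar Al) (.add p (.add x q)) (.add (.add p x) q) :=
    DerivEq.symm (dB2 ..)
  have c4 : DerivEq (ACCEq Ar Al) (.add (.add p x) q) (.add p q) :=
    DerivEq.add h (DerivEq.refl q)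
  exact DerivEq.trans (DerivEq.trans (DerivEq.trans c1 c2) c3) c4

lemma ple_mono_right {x q : Proc A} (p : Proc A) (h : ple Ar Al x q) :
    ple Ar Al x (.add p q) :=
  ple_congr_right Ar Al (ple_mono_left Ar Al p h) (dB1 ..)

lemma ple_add {p q t : Proc A} (h1 : ple Ar Al p t) (h2 : ple Ar Al q t) :
    ple Ar Al (.add p q) t := by
  unfold ple at *
  have c1 : DerivEq (ACCEq Ar Al) (.add t (.add p q)) (.add (.add t p) q) :=
    DerivEq.symm (dB2 ..)
  have c2 : DerivEq (ACCEq Ar Al) (.add (.add t p) q) (.add t q) :=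
    DerivEq.add h1 (DerivEq.refl q)
  exact DerivEq.trans (DerivEq.trans c1 c2) h2

lemma ple_nil (t : Proc A) : ple Ar Al .nil t := dB4 ..

lemma ple_of_forall_step {p t : Proc A}
    (h : ∀ b p', Step p b p' → ple Ar Al (.pre b p') t) : ple Ar Al p t := by
  induction p with
  | nil => exact ple_nil ..
  | pre a p ih => exact h a p (Step.pre a p)
  | add p q ih1 ih2 =>
      exact ple_add Ar Al
        (ih1 fun b p' hs => h b p' (Step.addL _ hs))
        (ih2 fun b p' hs => h b p' (Step.addR _ hs))

lemma ple_summand {q : Proc A} {b : A} {q' : Proc A} (h : Step q b q') :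
    ple Ar Al (.pre b q') q := by
  induction h with
  | pre a p => exact ple_refl ..
  | addL q _ ih => exact ple_mono_left Ar Al _ ih
  | addR p _ ih => exact ple_mono_right Ar Al _ ih

lemma ple_antisymm {u v : Proc A} (h1 : ple Ar Al u v) (h2 : ple Ar Al v u) :
    DerivEq (ACCEq Ar Al) u v := by
  -- u = u + v = v + u = v
  exact DerivEq.trans (DerivEq.trans (DerivEq.symm h2) (dB1 ..)) h1

/-- Chain lemma using S1: inside an `Ar`-prefix, summands with `Ar` actions
may be removed. -/
lemma chain_S1 {a : A} (ha : a ∈ Ar) {r : Proc A}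
    (hr : ∀ b r', Step r b r' → b ∈ Ar) (x : Proc A) :
    ple Ar Al (.pre a x) (.pre a (.add x r)) := by
  induction r generalizing x with
  | nil =>
      exact ple_congr_right Ar Al (ple_refl ..)
        (DerivEq.pre a (DerivEq.symm (dB4 ..)))
  | pre b y ih =>
      have hb : b ∈ Ar := hr b y (Step.pre b y)
      exact DerivEq.symm (dS1 Ar Al ha hb x y)
  | add r1 r2 ih1 ih2 =>
      have h1 : ple Ar Al (.pre a x) (.pre a (.add x r1)) :=
        ih1 (fun b r' hs => hr b r' (Step.addL _ hs)) x
      have h2 : ple Ar Al (.pre a (.add x r1)) (.pre a (.add (.add x r1) r2)) :=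
        ih2 (fun b r' hs => hr b r' (Step.addR _ hs)) (.add x r1)
      exact ple_congr_right Ar Al (ple_trans Ar Al h1 h2) (DerivEq.pre a (dB2 ..))

/-- Chain lemma using S2: inside an `Ar`-prefix, summands with `Al` actions
are absorbed. -/
lemma chain_S2 {a : A} (ha : a ∈ Ar) {r : Proc A}
    (hr : ∀ b r', Step r b r' → b ∈ Al) (x : Proc A) :
    ple Ar Al (.pre a (.add x r)) (.pre a x) := by
  induction r generalizing x with
  | nil =>
      exact ple_congr_left Ar Al (ple_refl ..)
        (DerivEq.pre a (dB4 ..))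
  | pre b y ih =>
      have hb : b ∈ Al := hr b y (Step.pre b y)
      exact DerivEq.symm (dS2 Ar Al ha hb x y)
  | add r1 r2 ih1 ih2 =>
      have h2 : ple Ar Al (.pre a (.add (.add x r1) r2)) (.pre a (.add x r1)) :=
        ih2 (fun b r' hs => hr b r' (Step.addR _ hs)) (.add x r1)
      have h1 : ple Ar Al (.pre a (.add x r1)) (.pre a x) :=
        ih1 (fun b r' hs => hr b r' (Step.addL _ hs)) x
      exact ple_congr_left Ar Al (ple_trans Ar Al h2 h1)
        (DerivEq.pre a (DerivEq.symm (dB2 ..)))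

/-- Chain lemma using S3: inside an `Al`-prefix, summands with `Ar` actions
are absorbed. -/
lemma chain_S3 {a : A} (ha : a ∈ Al) {r : Proc A}
    (hr : ∀ b r', Step r b r' → b ∈ Ar) (x : Proc A) :
    ple Ar Al (.pre a (.add x r)) (.pre a x) := by
  induction r generalizing x with
  | nil =>
      exact ple_congr_left Ar Al (ple_refl ..)
        (DerivEq.pre a (dB4 ..))
  | pre b y ih =>
      have hb : b ∈ Ar := hr b y (Step.pre b y)
      exact DerivEq.symm (dS3 Ar Al ha hb x y)
  | add r1 r2 ih1 ih2 =>
      have h2 : ple Ar Al (.pre a (.add (.add x r1) r2)) (.pre a (.add x r1)) :=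
        ih2 (fun b r' hs => hr b r' (Step.addR _ hs)) (.add x r1)
      have h1 : ple Ar Al (.pre a (.add x r1)) (.pre a x) :=
        ih1 (fun b r' hs => hr b r' (Step.addL _ hs)) x
      exact ple_congr_left Ar Al (ple_trans Ar Al h2 h1)
        (DerivEq.pre a (DerivEq.symm (dB2 ..)))

/-- Chain lemma using S4: inside an `Al`-prefix, summands with `Al` actions
may be removed. -/
lemma chain_S4 {a : A} (ha : a ∈ Al) {r : Proc A}
    (hr : ∀ b r', Step r b r' → b ∈ Al) (x : Proc A) :
    ple Ar Al (.pre a x) (.pre a (.add x r)) := by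
  induction r generalizing x with
  | nil =>
      exact ple_congr_right Ar Al (ple_refl ..)
        (DerivEq.pre a (DerivEq.symm (dB4 ..)))
  | pre b y ih =>
      have hb : b ∈ Al := hr b y (Step.pre b y)
      exact DerivEq.symm (dS4 Ar Al ha hb x y)
  | add r1 r2 ih1 ih2 =>
      have h1 : ple Ar Al (.pre a x) (.pre a (.add x r1)) :=
        ih1 (fun b r' hs => hr b r' (Step.addL _ hs)) x
      have h2 : ple Ar Al (.pre a (.add x r1)) (.pre a (.add (.add x r1) r2)) :=
        ih2 (fun b r' hs => hr b r' (Step.addR _ hs)) (.add x r1)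
      exact ple_congr_right Ar Al (ple_trans Ar Al h1 h2) (DerivEq.pre a (dB2 ..))

lemma ccLe_stepR {p q : Proc A} {a : A} {p' : Proc A}
    (h : ccLe Ar Al ∅ p q) (ha : a ∈ Ar) (hs : Step p a p') :
    ∃ q', Step q a q' ∧ ccLe Ar Al ∅ p' q' := by
  obtain ⟨S, hS, hpq⟩ := h
  obtain ⟨q', hq', hS'⟩ := (hS p q hpq).1 a (Set.mem_union_left _ ha) p' hs
  exact ⟨q', hq', S, hS, hS'⟩

lemma ccLe_stepL {p q : Proc A} {a : A} {q' : Proc A}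
    (h : ccLe Ar Al ∅ p q) (ha : a ∈ Al) (hs : Step q a q') :
    ∃ p', Step p a p' ∧ ccLe Ar Al ∅ p' q' := by
  obtain ⟨S, hS, hpq⟩ := h
  obtain ⟨p', hp', hS'⟩ := (hS p q hpq).2 a (Set.mem_union_left _ ha) q' hs
  exact ⟨p', hp', S, hS, hS'⟩

/-- Main lemma: by induction on sizes, the CC-simulation preorder is reflected
in derivable absorptions under covariant/contravariant prefixes. -/
lemma main (hcov : ∀ a : A, a ∈ Ar ∨ a ∈ Al) :
    ∀ n p q, psize p + psize q ≤ n → ccLe Ar Al ∅ p q →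
      (∀ a ∈ Ar, ple Ar Al (.pre a p) (.pre a q)) ∧
      (∀ a ∈ Al, ple Ar Al (.pre a q) (.pre a p)) := by
  intro n
  induction n with
  | zero =>
      intro p q hle
      have := psize_pos p; have := psize_pos q; omega
  | succ n ih =>
      intro p q hle hpq
      set Pl : Proc A := restrP Al p with hPl
      set Qr : Proc A := restrP Ar q with hQr
      set u : Proc A := .add q Pl with hu
      set v : Proc A := .add p Qr with hv
      -- step facts
      have hPl_steps : ∀ b r', Step Pl b r' → b ∈ Al := fun b r' hs =>
        (step_restrP hs).2
      have hQr_steps : ∀ b r', Step Qr b r' → b ∈ Ar := fun b r' hs =>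
        (step_restrP hs).2
      -- ple v u
      have hvu : ple Ar Al v u := by
        apply ple_add
        · -- ple p u
          apply ple_of_forall_step
          intro b p' hs
          rcases hcov b with hb | hb
          · obtain ⟨q', hq', hle'⟩ := ccLe_stepR Ar Al hpq hb hs
            have hszp := step_psize hs
            have hszq := step_psize hq'
            have hih := (ih p' q' (by omega) hle').1 b hb
            exact ple_mono_left Ar Al _
              (ple_trans Ar Al hih (ple_summand Ar Al hq'))
          · exact ple_mono_right Ar Al _
              (ple_summand Ar Al (restrP_step hs hb))
        · -- ple Qr u
          apply ple_of_forall_step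
          intro b s hs
          exact ple_mono_left Ar Al _ (ple_summand Ar Al (step_restrP hs).1)
      -- ple u v
      have huv : ple Ar Al u v := by
        apply ple_add
        · -- ple q v
          apply ple_of_forall_step
          intro b q' hs
          rcases hcov b with hb | hb
          · exact ple_mono_right Ar Al _
              (ple_summand Ar Al (restrP_step hs hb))
          · obtain ⟨p', hp', hle'⟩ := ccLe_stepL Ar Al hpq hb hs
            have hszp := step_psize hp'
            have hszq := step_psize hs
            have hih := (ih p' q' (by omega) hle').2 b hb
            exact ple_mono_left Ar Al _
              (ple_trans Ar Al hih (ple_summand Ar Al hp'))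
        · -- ple Pl v
          apply ple_of_forall_step
          intro b s hs
          exact ple_mono_left Ar Al _ (ple_summand Ar Al (step_restrP hs).1)
      have huveq : DerivEq (ACCEq Ar Al) u v := ple_antisymm Ar Al huv hvu
      constructor
      · intro a ha
        have h1 : ple Ar Al (.pre a p) (.pre a v) := chain_S1 Ar Al ha hQr_steps p
        have h2 : ple Ar Al (.pre a p) (.pre a u) :=
          ple_congr_right Ar Al h1 (DerivEq.pre a (DerivEq.symm huveq))
        have h3 : ple Ar Al (.pre a u) (.pre a q) := chain_S2 Ar Al ha hPl_steps q
        exact ple_trans Ar Al h2 h3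
      · intro a ha
        have h1 : ple Ar Al (.pre a q) (.pre a u) := chain_S4 Ar Al ha hPl_steps q
        have h2 : ple Ar Al (.pre a q) (.pre a v) :=
          ple_congr_right Ar Al h1 (DerivEq.pre a huveq)
        have h3 : ple Ar Al (.pre a v) (.pre a p) := chain_S3 Ar Al ha hQr_steps p
        exact ple_trans Ar Al h2 h3

end CCAux

/-- When `A^bi = ∅`, the axiom set `A_CC^≡` is complete for
covariant-contravariant simulation equivalence. -/
theorem ACCEq_complete {A : Type} (Ar Al Abi : Set A)
    (hpart : IsPartition Ar Al Abi) (hbi : Abi = ∅)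
    (p q : Proc A) (hpq : ccEq Ar Al Abi p q) :
    DerivEq (ACCEq Ar Al) p q := by
  subst hbi
  have hcov : ∀ a : A, a ∈ Ar ∨ a ∈ Al := by
    intro a
    have h := hpart.1
    have ha : a ∈ Ar ∪ Al ∪ (∅ : Set A) := h ▸ Set.mem_univ a
    simpa using ha
  obtain ⟨h1, h2⟩ := hpq
  have hpq' : CCAux.ple Ar Al p q := by
    apply CCAux.ple_of_forall_step
    intro b p' hs
    rcases hcov b with hb | hb
    · obtain ⟨q', hq', hle'⟩ := CCAux.ccLe_stepR Ar Al h1 hb hs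
      exact CCAux.ple_trans Ar Al
        ((CCAux.main Ar Al hcov _ p' q' le_rfl hle').1 b hb)
        (CCAux.ple_summand Ar Al hq')
    · obtain ⟨q', hq', hle'⟩ := CCAux.ccLe_stepL Ar Al h2 hb hs
      exact CCAux.ple_trans Ar Al
        ((CCAux.main Ar Al hcov _ q' p' le_rfl hle').2 b hb)
        (CCAux.ple_summand Ar Al hq')
  have hqp' : CCAux.ple Ar Al q p := by
    apply CCAux.ple_of_forall_step
    intro b q' hs
    rcases hcov b with hb | hb
    · obtain ⟨p', hp', hle'⟩ := CCAux.ccLe_stepR Ar Al h2 hb hs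
      exact CCAux.ple_trans Ar Al
        ((CCAux.main Ar Al hcov _ q' p' le_rfl hle').1 b hb)
        (CCAux.ple_summand Ar Al hp')
    · obtain ⟨p', hp', hle'⟩ := CCAux.ccLe_stepL Ar Al h1 hb hs
      exact CCAux.ple_trans Ar Al
        ((CCAux.main Ar Al hcov _ p' q' le_rfl hle').2 b hb)
        (CCAux.ple_summand Ar Al hp')
  exact CCAux.ple_antisymm Ar Al hpq' hqp'
end
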